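/- For n ≥ 1, let p_n denote the probability that the root of a random binary search tree 𝒯_n with n vertices belongs to the layered independent set of 𝒯_n, and set p_0 := 0. Then, for all n ≥ 1, p_n = (1/n) Σ_{j=0}^{n−1} (1 − p_j)(1 − p_{n−1−j}). -/

import Mathlib

open MeasureTheory ProbabilityTheory Filter Asymptotics

/-- Binary trees with natural number keys. -/
inductive BT : Type
  | nil : BT
  | node : BT → ℕ → BT → BT

/-- Binary search tree insertion: smaller keys go left, others go right. -/
def BT.insert : BT → ℕ → BT
  | .nil, k => .node .nil k .nil
  | .node l x r, k => if k < x then .node (l.insert k) x r else .node l x (r.insert k)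

/-- The binary search tree built by successively inserting the keys of a list. -/
def bstOfList (l : List ℕ) : BT := l.foldl BT.insert .nil

def BT.rootKeys : BT → List ℕ
  | .nil => []
  | .node _ k _ => [k]

/-- The list of (parent, child) pairs of a binary tree. -/
def BT.pairs : BT → List (ℕ × ℕ)
  | .nil => []
  | .node l k r =>
      (l.rootKeys.map fun x => (k, x)) ++ (r.rootKeys.map fun x => (k, x)) ++ l.pairs ++ r.pairs

/-- The binary search tree built from the insertion order `π 0, π 1, …, π (n-1)`,
viewed as a graph on the keys `Fin n`: two keys are adjacent iff one is the parent
of the other in the binary search tree. -/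
def bstGraph (n : ℕ) (π : Equiv.Perm (Fin n)) : SimpleGraph (Fin n) :=
  SimpleGraph.fromRel fun i j =>
    ((i : ℕ), (j : ℕ)) ∈ (bstOfList (List.ofFn fun k => (π k : ℕ))).pairs

instance (n : ℕ) : MeasurableSpace (Equiv.Perm (Fin n)) := ⊤

/-- The uniform probability measure on permutations of `{0, …, n-1}`; the random binary
search tree is built from a uniformly random permutation. -/
noncomputable def bstMeasure (n : ℕ) : Measure (Equiv.Perm (Fin n)) :=
  haveI : Nonempty (Equiv.Perm (Fin n)) := ⟨Equiv.refl _⟩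
  (PMF.uniformOfFintype (Equiv.Perm (Fin n))).toMeasure

/-- The graph associated to a parent function `p` on the vertex set `V`:
`u` and `v` are adjacent iff one is the parent of the other (fixed points give no loops). -/
def parentGraph {V : Type*} (p : V → V) : SimpleGraph V :=
  SimpleGraph.fromRel fun u v => p u = v

/-- The leaves of the forest induced on the vertex subset `S`: members of `S` with no
children inside `S`. -/
def leafIn {V : Type*} (p : V → V) (S : Set V) : Set V :=
  {v | v ∈ S ∧ ∀ u ∈ S, u ≠ v → p u ≠ v}

/-- One step of the layer process: remove from `S` all leaves together with their parents. -/
def layerStep {V : Type*} (p : V → V) (S : Set V) : Set V :=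
  S \ (leafIn p S ∪ {v | v ∈ S ∧ ∃ u ∈ leafIn p S, u ≠ v ∧ p u = v})

/-- `layerFrom p S₀ ℓ` is `T^[ℓ]` for the forest induced on the vertex set `S₀`. -/
def layerFrom {V : Type*} (p : V → V) (S₀ : Set V) : ℕ → Set V
  | 0 => S₀
  | ℓ + 1 => layerStep p (layerFrom p S₀ ℓ)

/-- The layered independent set of the forest induced on the vertex set `S₀`:
the union over all `ℓ` of the leaves of `T^[ℓ]`. -/
def layeredIndepSetOn {V : Type*} (p : V → V) (S₀ : Set V) : Set V :=
  ⋃ ℓ : ℕ, leafIn p (layerFrom p S₀ ℓ)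

/-- The layered independent set of the tree/forest with parent function `p`. -/
def layeredIndepSet {V : Type*} (p : V → V) : Set V :=
  layeredIndepSetOn p Set.univ

/-- The parent function of the binary search tree built from the insertion order `π`:
each non-root key is sent to its parent, the root (and nothing else) is a fixed point. -/
noncomputable def bstParent (n : ℕ) (π : Equiv.Perm (Fin n)) : Fin n → Fin n := fun v =>
  if h : ∃ u : Fin n, ((u : ℕ), (v : ℕ)) ∈ (bstOfList (List.ofFn fun k => (π k : ℕ))).pairs
  then h.choose else v

/-- The probability that the root (the first inserted key `π 0`) of a random binary search
tree with `n` vertices belongs to the layered independent set. -/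
noncomputable def bstRootProb (n : ℕ) : ℝ :=
  ((bstMeasure n) {π : Equiv.Perm (Fin n) | ∃ h : 0 < n,
    π ⟨0, h⟩ ∈ layeredIndepSet (bstParent n π)}).toReal

namespace BTAux

def keysB : BT → List ℕ
  | .nil => []
  | .node L k R => keysB L ++ k :: keysB R

lemma foldl_insert_node (t : List ℕ) : ∀ (L R : BT) (k : ℕ),
    t.foldl BT.insert (.node L k R) =
      .node ((t.filter (fun x => x < k)).foldl BT.insert L) k
        ((t.filter (fun x => ¬ x < k)).foldl BT.insert R) := by
  induction t with
  | nil => intros; rfl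
  | cons a t ih =>
    intro L R k
    by_cases h : a < k
    · simp [List.foldl_cons, BT.insert, h, ih, List.filter_cons, not_lt]
    · have h' : k ≤ a := not_lt.mp h
      simp [List.foldl_cons, BT.insert, h, h', ih, List.filter_cons, not_lt]

lemma bstOfList_cons (k : ℕ) (t : List ℕ) :
    bstOfList (k :: t) =
      .node (bstOfList (t.filter (fun x => x < k))) k
        (bstOfList (t.filter (fun x => ¬ x < k))) := by
  show t.foldl BT.insert (BT.insert .nil k) = _
  exact foldl_insert_node t .nil .nil k

lemma mem_keysB_bstOfList (l : List ℕ) (x : ℕ) :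
    x ∈ keysB (bstOfList l) ↔ x ∈ l := by
  generalize hn : l.length = n
  induction n using Nat.strong_induction_on generalizing l with
  | _ n ih =>
    match l with
    | [] => simp [bstOfList, keysB]
    | k :: t =>
      subst hn
      rw [bstOfList_cons]
      have h1 := ih (t.filter (fun x => x < k)).length
        (lt_of_le_of_lt (List.length_filter_le _ _) (Nat.lt_succ_self _)) _ rfl
      have h2 := ih (t.filter (fun x => ¬ x < k)).length
        (lt_of_le_of_lt (List.length_filter_le _ _) (Nat.lt_succ_self _)) _ rfl
      simp only [keysB, List.mem_append, List.mem_cons, h1, h2, List.mem_filter,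
        decide_eq_true_eq]
      by_cases hx : x < k <;> by_cases hxt : x ∈ t <;> simp [hx, hxt]

lemma nodup_keysB (l : List ℕ) (hl : l.Nodup) : (keysB (bstOfList l)).Nodup := by
  generalize hn : l.length = n
  induction n using Nat.strong_induction_on generalizing l with
  | _ n ih =>
    match l with
    | [] => simp [bstOfList, keysB]
    | k :: t =>
      subst hn
      rw [bstOfList_cons]
      obtain ⟨hkt, ht⟩ := List.nodup_cons.mp hl
      have h1 := ih (t.filter (fun x => x < k)).length
        (lt_of_le_of_lt (List.length_filter_le _ _) (Nat.lt_succ_self _)) _ (ht.filter _) rfl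
      have h2 := ih (t.filter (fun x => ¬ x < k)).length
        (lt_of_le_of_lt (List.length_filter_le _ _) (Nat.lt_succ_self _)) _ (ht.filter _) rfl
      simp only [keysB, List.nodup_append, List.nodup_cons]
      refine ⟨h1, ⟨?_, h2⟩, ?_⟩
      · intro hk
        exact hkt (List.mem_of_mem_filter ((mem_keysB_bstOfList _ _).mp hk))
      · intro x hx _ hx' rfl
        have hx1 : x < k := by
          have := (mem_keysB_bstOfList _ _).mp hx
          simpa using (List.mem_filter.mp this).2
        rcases List.mem_cons.mp hx' with rfl | hx2
        · exact absurd hx1 (lt_irrefl x)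
        · have h2' := (List.mem_filter.mp ((mem_keysB_bstOfList _ _).mp hx2)).2
          simp only [decide_eq_true_eq, not_lt, decide_not, Bool.not_eq_true',
            decide_eq_false_iff_not] at h2'
          exact absurd hx1 (by omega)

lemma mem_rootKeys_mem_keysB {T : BT} {x : ℕ} (h : x ∈ T.rootKeys) : x ∈ keysB T := by
  cases T with
  | nil => simp [BT.rootKeys] at h
  | node L k R => simp [BT.rootKeys] at h; simp [keysB, h]

lemma mem_pairs_node_iff {L R : BT} {k u v : ℕ} :
    (u, v) ∈ (BT.node L k R).pairs ↔
      (u = k ∧ v ∈ L.rootKeys) ∨ (u = k ∧ v ∈ R.rootKeys) ∨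
        (u, v) ∈ L.pairs ∨ (u, v) ∈ R.pairs := by
  simp only [BT.pairs, List.mem_append, List.mem_map, Prod.mk.injEq]
  constructor
  · rintro (((⟨x, hx, h1, h2⟩ | ⟨x, hx, h1, h2⟩) | h) | h)
    · exact Or.inl ⟨h1.symm, h2 ▸ hx⟩
    · exact Or.inr (Or.inl ⟨h1.symm, h2 ▸ hx⟩)
    · exact Or.inr (Or.inr (Or.inl h))
    · exact Or.inr (Or.inr (Or.inr h))
  · rintro (⟨rfl, hv⟩ | ⟨rfl, hv⟩ | h | h)
    · exact Or.inl (Or.inl (Or.inl ⟨v, hv, rfl, rfl⟩))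
    · exact Or.inl (Or.inl (Or.inr ⟨v, hv, rfl, rfl⟩))
    · exact Or.inl (Or.inr h)
    · exact Or.inr h

lemma mem_pairs_mem_keysB : ∀ (T : BT) {u v : ℕ}, (u, v) ∈ T.pairs →
    u ∈ keysB T ∧ v ∈ keysB T := by
  intro T
  induction T with
  | nil => intro u v h; simp [BT.pairs] at h
  | node L k R ihL ihR =>
    intro u v h
    rw [mem_pairs_node_iff] at h
    simp only [keysB, List.mem_append, List.mem_cons]
    rcases h with ⟨rfl, hv⟩ | ⟨rfl, hv⟩ | h | h
    · exact ⟨Or.inr (Or.inl rfl), Or.inl (mem_rootKeys_mem_keysB hv)⟩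
    · exact ⟨Or.inr (Or.inl rfl), Or.inr (Or.inr (mem_rootKeys_mem_keysB hv))⟩
    · exact ⟨Or.inl (ihL h).1, Or.inl (ihL h).2⟩
    · exact ⟨Or.inr (Or.inr (ihR h).1), Or.inr (Or.inr (ihR h).2)⟩

lemma nodup_node_facts {L R : BT} {k : ℕ} (h : (keysB (BT.node L k R)).Nodup) :
    (keysB L).Nodup ∧ (keysB R).Nodup ∧ k ∉ keysB L ∧ k ∉ keysB R ∧
      ∀ x ∈ keysB L, x ∉ keysB R := by
  simp only [keysB, List.nodup_append, List.nodup_cons] at h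
  obtain ⟨h1, ⟨h2, h3⟩, h4⟩ := h
  refine ⟨h1, h3, fun hk => h4 _ hk _ List.mem_cons_self rfl, h2,
    fun x hx hx' => h4 _ hx _ (List.mem_cons_of_mem _ hx') rfl⟩

lemma root_not_snd : ∀ (T : BT), (keysB T).Nodup → ∀ {x : ℕ}, x ∈ T.rootKeys →
    ∀ u, (u, x) ∉ T.pairs := by
  intro T
  cases T with
  | nil => intro _ x hx; simp [BT.rootKeys] at hx
  | node L k R =>
    intro hnd x hx u h
    obtain ⟨_, _, hkL, hkR, _⟩ := nodup_node_facts hnd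
    simp only [BT.rootKeys, List.mem_singleton] at hx
    subst hx
    rw [mem_pairs_node_iff] at h
    rcases h with ⟨_, hv⟩ | ⟨_, hv⟩ | h | h
    · exact hkL (mem_rootKeys_mem_keysB hv)
    · exact hkR (mem_rootKeys_mem_keysB hv)
    · exact hkL (mem_pairs_mem_keysB L h).2
    · exact hkR (mem_pairs_mem_keysB R h).2

lemma snd_unique : ∀ (T : BT), (keysB T).Nodup → ∀ {u u' v : ℕ},
    (u, v) ∈ T.pairs → (u', v) ∈ T.pairs → u = u' := by
  intro T
  induction T with
  | nil => intro _ u u' v h; simp [BT.pairs] at h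
  | node L k R ihL ihR =>
    intro hnd u u' v h h'
    obtain ⟨hL, hR, hkL, hkR, hdisj⟩ := nodup_node_facts hnd
    rw [mem_pairs_node_iff] at h h'
    rcases h with ⟨rfl, hv⟩ | ⟨rfl, hv⟩ | h | h <;>
      rcases h' with ⟨rfl, hv'⟩ | ⟨rfl, hv'⟩ | h' | h'
    · rfl
    · rfl
    · exact absurd h' (root_not_snd L hL hv u')
    · exact absurd (mem_pairs_mem_keysB R h').2 (hdisj v (mem_rootKeys_mem_keysB hv))
    · rfl
    · rfl
    · exact absurd (mem_rootKeys_mem_keysB hv) (hdisj v (mem_pairs_mem_keysB L h').2)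
    · exact absurd h' (root_not_snd R hR hv u')
    · exact absurd h (root_not_snd L hL hv' u)
    · exact absurd (mem_rootKeys_mem_keysB hv') (hdisj v (mem_pairs_mem_keysB L h).2)
    · exact ihL hL h h'
    · exact absurd (mem_pairs_mem_keysB R h').2 (hdisj v (mem_pairs_mem_keysB L h).2)
    · exact absurd (mem_pairs_mem_keysB R h).2 (hdisj v (mem_rootKeys_mem_keysB hv'))
    · exact absurd h (root_not_snd R hR hv' u)
    · exact absurd (mem_pairs_mem_keysB R h).2 (hdisj v (mem_pairs_mem_keysB L h').2)
    · exact ihR hR h h'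

lemma pairwise_pairs {Rrel : ℕ → ℕ → Prop} : ∀ (l : List ℕ), l.Pairwise Rrel →
    ∀ {u v : ℕ}, (u, v) ∈ (bstOfList l).pairs → Rrel u v := by
  intro l
  generalize hn : l.length = n
  induction n using Nat.strong_induction_on generalizing l with
  | _ n ih =>
    match l with
    | [] => intro _ u v h; simp [bstOfList, BT.pairs] at h
    | k :: t =>
      subst hn
      intro hp u v h
      obtain ⟨hk, ht⟩ := List.pairwise_cons.mp hp
      rw [bstOfList_cons, mem_pairs_node_iff] at h
      have e1 : (t.filter (fun x => x < k)).length < t.length + 1 :=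
        lt_of_le_of_lt (List.length_filter_le _ _) (Nat.lt_succ_self _)
      have e2 : (t.filter (fun x => ¬ x < k)).length < t.length + 1 :=
        lt_of_le_of_lt (List.length_filter_le _ _) (Nat.lt_succ_self _)
      rcases h with ⟨rfl, hv⟩ | ⟨rfl, hv⟩ | h | h
      · exact hk v (List.mem_of_mem_filter
          ((mem_keysB_bstOfList _ _).mp (mem_rootKeys_mem_keysB hv)))
      · exact hk v (List.mem_of_mem_filter
          ((mem_keysB_bstOfList _ _).mp (mem_rootKeys_mem_keysB hv)))
      · exact ih _ e1 _ rfl (ht.sublist List.filter_sublist) h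
      · exact ih _ e2 _ rfl (ht.sublist List.filter_sublist) h

end BTAux

namespace LayerAux

variable {V : Type*} (p : V → V)

lemma leafIn_subset (S : Set V) : leafIn p S ⊆ S := fun _ hv => hv.1

lemma layerStep_subset (S : Set V) : layerStep p S ⊆ S := Set.diff_subset

lemma layerFrom_subset (S : Set V) : ∀ ℓ, layerFrom p S ℓ ⊆ S
  | 0 => le_refl _
  | ℓ + 1 => (layerStep_subset p _).trans (layerFrom_subset S ℓ)

lemma layerFrom_anti (S : Set V) {ℓ ℓ' : ℕ} (h : ℓ ≤ ℓ') :
    layerFrom p S ℓ' ⊆ layerFrom p S ℓ := by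
  induction h with
  | refl => exact le_refl _
  | step _ ih => exact (layerStep_subset p _).trans ih

lemma layeredIndepSetOn_subset (S : Set V) : layeredIndepSetOn p S ⊆ S := by
  intro v hv
  obtain ⟨ℓ, hℓ⟩ := Set.mem_iUnion.mp hv
  exact layerFrom_subset p S ℓ (leafIn_subset p _ hℓ)

variable {A : Set V}

lemma leafIn_inter (hA : ∀ u, p u ∈ A → u ∈ A) (S : Set V) : leafIn p (S ∩ A) = leafIn p S ∩ A := by
  ext v
  constructor
  · rintro ⟨⟨hvS, hvA⟩, hnc⟩
    refine ⟨⟨hvS, fun u hu hne hpu => ?_⟩, hvA⟩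
    exact hnc u ⟨hu, hA u (hpu ▸ hvA)⟩ hne hpu
  · rintro ⟨⟨hvS, hnc⟩, hvA⟩
    exact ⟨⟨hvS, hvA⟩, fun u hu hne hpu => hnc u hu.1 hne hpu⟩

lemma layerStep_inter (hA : ∀ u, p u ∈ A → u ∈ A) (S : Set V) :
    layerStep p (S ∩ A) = layerStep p S ∩ A := by
  ext v
  constructor
  · rintro ⟨⟨hvS, hvA⟩, hnr⟩
    refine ⟨⟨hvS, fun h => hnr ?_⟩, hvA⟩
    rcases h with h | ⟨_, u, hu, hne, hpu⟩
    · exact Or.inl (by rw [leafIn_inter p hA S]; exact ⟨h, hvA⟩)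
    · refine Or.inr ⟨⟨hvS, hvA⟩, u, ?_, hne, hpu⟩
      rw [leafIn_inter p hA S]; exact ⟨hu, hA u (hpu ▸ hvA)⟩
  · rintro ⟨⟨hvS, hnr⟩, hvA⟩
    refine ⟨⟨hvS, hvA⟩, fun h => hnr ?_⟩
    rcases h with h | ⟨_, u, hu, hne, hpu⟩
    · have h' : v ∈ leafIn p S ∩ A := by rw [← leafIn_inter p hA S] at *; exact h
      exact Or.inl h'.1
    · have hu' : u ∈ leafIn p S ∩ A := by rw [← leafIn_inter p hA S] at *; exact hu
      exact Or.inr ⟨hvS, u, hu'.1, hne, hpu⟩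

lemma layerFrom_inter (hA : ∀ u, p u ∈ A → u ∈ A) (S : Set V) : ∀ ℓ, layerFrom p (S ∩ A) ℓ = layerFrom p S ℓ ∩ A
  | 0 => rfl
  | ℓ + 1 => by
    show layerStep p (layerFrom p (S ∩ A) ℓ) = layerStep p (layerFrom p S ℓ) ∩ A
    rw [layerFrom_inter hA S ℓ, layerStep_inter p hA]

lemma leafIn_nonempty (d : V → ℕ) (hd : ∀ u, p u ≠ u → d (p u) < d u) {S : Set V}
    (hS : S.Nonempty) (hfin : S.Finite) : (leafIn p S).Nonempty := by
  obtain ⟨v, hvS, hmax⟩ := Set.exists_max_image S d hfin hS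
  refine ⟨v, hvS, fun u hu hne hpu => ?_⟩
  have h1 : d v < d u := by
    have := hd u (by rw [hpu]; exact hne.symm)
    rwa [hpu] at this
  exact absurd (hmax u hu) (not_le.mpr h1)

lemma layerFrom_shift (S : Set V) : ∀ ℓ, layerFrom p S (ℓ + 1) = layerFrom p (layerStep p S) ℓ
  | 0 => rfl
  | ℓ + 1 => by
    show layerStep p (layerFrom p S (ℓ + 1)) = layerStep p (layerFrom p (layerStep p S) ℓ)
    rw [layerFrom_shift S ℓ]

lemma exists_layerFrom_empty (d : V → ℕ) (hd : ∀ u, p u ≠ u → d (p u) < d u) {S : Set V}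
    (hfin : S.Finite) : ∃ N, layerFrom p S N = ∅ := by
  generalize hn : S.ncard = n
  induction n using Nat.strong_induction_on generalizing S with
  | _ n ih =>
    rcases Set.eq_empty_or_nonempty S with rfl | hS
    · refine ⟨0, rfl⟩
    · obtain ⟨w, hw⟩ := leafIn_nonempty p d hd hS hfin
      have hss : layerStep p S ⊂ S := by
        refine ⟨layerStep_subset p S, fun hsub => ?_⟩
        have := hsub hw.1
        exact this.2 (Or.inl hw)
      have hlt : (layerStep p S).ncard < n := hn ▸ Set.ncard_lt_ncard hss hfin
      obtain ⟨N, hN⟩ := ih _ hlt (hfin.subset (layerStep_subset p S)) rfl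
      exact ⟨N + 1, by rw [layerFrom_shift]; exact hN⟩

lemma layerFrom_empty_mono {S : Set V} {N M : ℕ} (h : layerFrom p S N = ∅) (hNM : N ≤ M) :
    layerFrom p S M = ∅ :=
  Set.subset_empty_iff.mp (h ▸ layerFrom_anti p S hNM)


section Split

variable {V : Type*} (p : V → V) {r : V} {A B : Set V}

lemma not_root_mem_of_child_mem {K : Set V} (hA : ∀ u, p u ∈ A → u ∈ A) (hAK : A ⊆ K)
    {u : V} (hu : u ≠ r) (hpu : p u = r) (huA : u ∈ layeredIndepSetOn p A) :
    r ∉ layeredIndepSetOn p K := by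
  obtain ⟨m, hm⟩ : ∃ m, u ∈ leafIn p (layerFrom p A m) := Set.mem_iUnion.mp huA
  have hKA : K ∩ A = A := Set.inter_eq_right.mpr hAK
  have e : ∀ ℓ, leafIn p (layerFrom p A ℓ) = leafIn p (layerFrom p K ℓ) ∩ A := by
    intro ℓ
    conv_lhs => rw [← hKA]
    rw [layerFrom_inter p hA K ℓ, leafIn_inter p hA]
  rw [e m] at hm
  intro hr
  obtain ⟨ℓ, hℓ⟩ := Set.mem_iUnion.mp hr
  rcases le_or_gt ℓ m with hle | hlt
  · have huT : u ∈ layerFrom p K ℓ := layerFrom_anti p K hle (leafIn_subset p _ hm.1)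
    exact hℓ.2 u huT hu hpu
  · have hrT : r ∉ layerFrom p K (m + 1) := by
      intro hmem
      have hmem' : r ∈ layerStep p (layerFrom p K m) := hmem
      have hrm : r ∈ layerFrom p K m := layerStep_subset p _ hmem'
      exact hmem'.2 (Or.inr ⟨hrm, u, hm.1, hu, hpu⟩)
    exact hrT (layerFrom_anti p K hlt (leafIn_subset p _ hℓ))

theorem root_split (d : V → ℕ) (hd : ∀ u, p u ≠ u → d (p u) < d u)
    (hA : ∀ u, p u ∈ A → u ∈ A) (hB : ∀ u, p u ∈ B → u ∈ B)
    (hAfin : A.Finite) (hBfin : B.Finite) (hrA : r ∉ A) (hrB : r ∉ B) :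
    r ∈ layeredIndepSetOn p (insert r (A ∪ B)) ↔
      ∀ u, u ≠ r → p u = r → u ∉ layeredIndepSetOn p A ∧ u ∉ layeredIndepSetOn p B := by
  set K : Set V := insert r (A ∪ B) with hK
  have hAK : A ⊆ K := (Set.subset_union_left).trans (Set.subset_insert _ _)
  have hBK : B ⊆ K := (Set.subset_union_right).trans (Set.subset_insert _ _)
  have eA : ∀ ℓ, leafIn p (layerFrom p A ℓ) = leafIn p (layerFrom p K ℓ) ∩ A := by
    intro ℓ
    conv_lhs => rw [← Set.inter_eq_right.mpr hAK]
    rw [layerFrom_inter p hA K ℓ, leafIn_inter p hA]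
  have eB : ∀ ℓ, leafIn p (layerFrom p B ℓ) = leafIn p (layerFrom p K ℓ) ∩ B := by
    intro ℓ
    conv_lhs => rw [← Set.inter_eq_right.mpr hBK]
    rw [layerFrom_inter p hB K ℓ, leafIn_inter p hB]
  have eA' : ∀ ℓ, layerFrom p A ℓ = layerFrom p K ℓ ∩ A := by
    intro ℓ
    conv_lhs => rw [← Set.inter_eq_right.mpr hAK]
    exact layerFrom_inter p hA K ℓ
  have eB' : ∀ ℓ, layerFrom p B ℓ = layerFrom p K ℓ ∩ B := by
    intro ℓ
    conv_lhs => rw [← Set.inter_eq_right.mpr hBK]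
    exact layerFrom_inter p hB K ℓ
  constructor
  · intro hr u hu hpu
    exact ⟨fun huA => not_root_mem_of_child_mem p hA hAK hu hpu huA hr,
           fun huB => not_root_mem_of_child_mem p hB hBK hu hpu huB hr⟩
  · intro H
    by_contra hr
    have hleaf : ∀ ℓ, r ∉ leafIn p (layerFrom p K ℓ) := fun ℓ h =>
      hr (Set.mem_iUnion.mpr ⟨ℓ, h⟩)
    have hmem : ∀ ℓ, r ∈ layerFrom p K ℓ := by
      intro ℓ
      induction ℓ with
      | zero => exact Set.mem_insert r _
      | succ ℓ ih =>
        refine ⟨ih, fun h => ?_⟩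
        rcases h with h | ⟨_, u, huleaf, hune, hpu⟩
        · exact hleaf ℓ h
        · have huK : u ∈ K := layerFrom_subset p K ℓ (leafIn_subset p _ huleaf)
          rcases huK with rfl | huAB
          · exact hune rfl
          rcases huAB with huA | huB
          · have hmemA : u ∈ layeredIndepSetOn p A :=
              Set.mem_iUnion.mpr ⟨ℓ, by rw [eA ℓ]; exact ⟨huleaf, huA⟩⟩
            exact (H u hune hpu).1 hmemA
          · have hmemB : u ∈ layeredIndepSetOn p B :=
              Set.mem_iUnion.mpr ⟨ℓ, by rw [eB ℓ]; exact ⟨huleaf, huB⟩⟩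
            exact (H u hune hpu).2 hmemB
    obtain ⟨NA, hNA⟩ := exists_layerFrom_empty p d hd hAfin
    obtain ⟨NB, hNB⟩ := exists_layerFrom_empty p d hd hBfin
    set N := max NA NB with hN
    have hAe : layerFrom p K N ∩ A = ∅ := by
      rw [← eA' N]; exact layerFrom_empty_mono p hNA (le_max_left _ _)
    have hBe : layerFrom p K N ∩ B = ∅ := by
      rw [← eB' N]; exact layerFrom_empty_mono p hNB (le_max_right _ _)
    apply hleaf N
    refine ⟨hmem N, fun u huT hune hpu => ?_⟩
    have huK : u ∈ K := layerFrom_subset p K N huT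
    rcases huK with rfl | huAB
    · exact hune rfl
    rcases huAB with huA | huB
    · exact absurd (Set.mem_inter huT huA) (by rw [hAe]; exact Set.notMem_empty u)
    · exact absurd (Set.mem_inter huT huB) (by rw [hBe]; exact Set.notMem_empty u)

end Split

end LayerAux

namespace PartD

open BTAux LayerAux

/-- The recursive "root is in the layered independent set" predicate. -/
def gBT : BT → Bool
  | .nil => false
  | .node L _ R => !(gBT L) && !(gBT R)

def treeOf {n : ℕ} (π : Equiv.Perm (Fin n)) : BT :=
  bstOfList (List.ofFn fun k => ((π k : ℕ)))

variable {n : ℕ} (π : Equiv.Perm (Fin n))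

lemma nodup_lst : (List.ofFn fun k => ((π k : ℕ))).Nodup := by
  rw [List.nodup_ofFn]
  exact Fin.val_injective.comp π.injective

lemma nodup_keys_treeOf : (keysB (treeOf π)).Nodup :=
  nodup_keysB _ (nodup_lst π)

lemma mem_keys_treeOf (x : ℕ) : x ∈ keysB (treeOf π) ↔ x < n := by
  rw [treeOf, mem_keysB_bstOfList, List.mem_ofFn]
  constructor
  · rintro ⟨i, rfl⟩; exact (π i).isLt
  · intro hx; exact ⟨π.symm ⟨x, hx⟩, by simp⟩

lemma parent_pair {v : Fin n} (h : bstParent n π v ≠ v) :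
    ((bstParent n π v : ℕ), (v : ℕ)) ∈ (treeOf π).pairs := by
  unfold bstParent at h ⊢
  split_ifs at h ⊢ with hex
  · exact hex.choose_spec
  · exact absurd rfl h

lemma parent_eq {u v : Fin n} (h : ((u : ℕ), (v : ℕ)) ∈ (treeOf π).pairs) :
    bstParent n π v = u := by
  unfold bstParent
  split_ifs with hex
  · exact Fin.val_injective (snd_unique _ (nodup_keys_treeOf π) hex.choose_spec h)
  · exact absurd ⟨u, h⟩ hex

lemma parent_depth : ∀ u : Fin n, bstParent n π u ≠ u →
    (List.ofFn fun k => ((π k : ℕ))).idxOf ((bstParent n π u : ℕ)) <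
      (List.ofFn fun k => ((π k : ℕ))).idxOf ((u : ℕ)) := by
  intro u h
  have hpr := parent_pair π h
  have hpw : (List.ofFn fun k => ((π k : ℕ))).Pairwise
      (fun a b => (List.ofFn fun k => ((π k : ℕ))).idxOf a <
        (List.ofFn fun k => ((π k : ℕ))).idxOf b) := by
    rw [List.pairwise_iff_getElem]
    intro i j hi hj hij
    rw [(nodup_lst π).idxOf_getElem i hi, (nodup_lst π).idxOf_getElem j hj]
    exact hij
  exact pairwise_pairs _ hpw hpr

/-- Subtree compatibility. -/
def IsSub (T T' : BT) : Prop :=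
  (∀ x ∈ keysB T', x ∈ keysB T) ∧
  (∀ pr ∈ T'.pairs, pr ∈ T.pairs) ∧
  (∀ u v : ℕ, (u, v) ∈ T.pairs → u ∈ keysB T' → (u, v) ∈ T'.pairs) ∧
  (∀ u v : ℕ, (u, v) ∈ T.pairs → v ∈ keysB T' → v ∉ T'.rootKeys → (u, v) ∈ T'.pairs)

lemma isSub_refl (T : BT) : IsSub T T :=
  ⟨fun _ h => h, fun _ h => h, fun _ _ h _ => h, fun _ _ h _ _ => h⟩

lemma isSub_left {T L R : BT} {k : ℕ} (hnd : (keysB (BT.node L k R)).Nodup)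
    (h : IsSub T (BT.node L k R)) : IsSub T L := by
  obtain ⟨hL, hR, hkL, hkR, hdisj⟩ := nodup_node_facts hnd
  obtain ⟨hkeys, hpairs, hchild, hpar⟩ := h
  have hmemL : ∀ x ∈ keysB L, x ∈ keysB (BT.node L k R) := by
    intro x hx; simp [keysB, hx]
  refine ⟨fun x hx => hkeys x (hmemL x hx), ?_, ?_, ?_⟩
  · intro pr hpr
    exact hpairs pr (by rw [BT.pairs]; simp [hpr])
  · intro u v huv hu
    have := hchild u v huv (hmemL u hu)
    rw [mem_pairs_node_iff] at this
    rcases this with ⟨rfl, _⟩ | ⟨rfl, _⟩ | h' | h'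
    · exact absurd hu hkL
    · exact absurd hu hkL
    · exact h'
    · exact absurd hu (fun hh => hdisj u hh (mem_pairs_mem_keysB R h').1)
  · intro u v huv hv hvroot
    have hvnode : v ∉ (BT.node L k R).rootKeys := by
      simp only [BT.rootKeys, List.mem_singleton]
      rintro rfl; exact hkL hv
    have := hpar u v huv (hmemL v hv) hvnode
    rw [mem_pairs_node_iff] at this
    rcases this with ⟨rfl, hv'⟩ | ⟨rfl, hv'⟩ | h' | h'
    · exact absurd hv' hvroot
    · exact absurd (mem_rootKeys_mem_keysB hv') (fun hh => hdisj v hv hh)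
    · exact h'
    · exact absurd (mem_pairs_mem_keysB R h').2 (fun hh => hdisj v hv hh)

lemma isSub_right {T L R : BT} {k : ℕ} (hnd : (keysB (BT.node L k R)).Nodup)
    (h : IsSub T (BT.node L k R)) : IsSub T R := by
  obtain ⟨hL, hR, hkL, hkR, hdisj⟩ := nodup_node_facts hnd
  obtain ⟨hkeys, hpairs, hchild, hpar⟩ := h
  have hmemR : ∀ x ∈ keysB R, x ∈ keysB (BT.node L k R) := by
    intro x hx; simp [keysB, hx]
  refine ⟨fun x hx => hkeys x (hmemR x hx), ?_, ?_, ?_⟩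
  · intro pr hpr
    exact hpairs pr (by rw [BT.pairs]; simp [hpr])
  · intro u v huv hu
    have := hchild u v huv (hmemR u hu)
    rw [mem_pairs_node_iff] at this
    rcases this with ⟨rfl, _⟩ | ⟨rfl, _⟩ | h' | h'
    · exact absurd hu hkR
    · exact absurd hu hkR
    · exact absurd hu (hdisj u (mem_pairs_mem_keysB L h').1)
    · exact h'
  · intro u v huv hv hvroot
    have hvnode : v ∉ (BT.node L k R).rootKeys := by
      simp only [BT.rootKeys, List.mem_singleton]
      rintro rfl; exact hkR hv
    have := hpar u v huv (hmemR v hv) hvnode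
    rw [mem_pairs_node_iff] at this
    rcases this with ⟨rfl, hv'⟩ | ⟨rfl, hv'⟩ | h' | h'
    · exact absurd hv (hdisj v (mem_rootKeys_mem_keysB hv'))
    · exact absurd hv' hvroot
    · exact absurd hv (hdisj v (mem_pairs_mem_keysB L h').2)
    · exact h'

theorem mem_LIS_iff_g : ∀ (T' : BT), (keysB T').Nodup → IsSub (treeOf π) T' →
    ((∃ x ∈ T'.rootKeys, ∃ hx : x < n,
        (⟨x, hx⟩ : Fin n) ∈ layeredIndepSetOn (bstParent n π)
          {v : Fin n | (v : ℕ) ∈ keysB T'}) ↔ gBT T' = true) := by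
  intro T'
  induction T' with
  | nil =>
    intro _ _
    simp [BT.rootKeys, gBT]
  | node L k R ihL ihR =>
    intro hnd hsub
    obtain ⟨hndL, hndR, hkL, hkR, hdisj⟩ := nodup_node_facts hnd
    have hsubL := isSub_left hnd hsub
    have hsubR := isSub_right hnd hsub
    have hkn : k < n := by
      rw [← mem_keys_treeOf π]
      exact hsub.1 k (by simp [keysB])
    set p := bstParent n π with hp
    set r : Fin n := ⟨k, hkn⟩ with hr
    set A : Set (Fin n) := {v : Fin n | (v : ℕ) ∈ keysB L} with hA
    set B : Set (Fin n) := {v : Fin n | (v : ℕ) ∈ keysB R} with hB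
    have setEq : {v : Fin n | (v : ℕ) ∈ keysB (BT.node L k R)} = insert r (A ∪ B) := by
      ext v
      simp only [Set.mem_setOf_eq, keysB, List.mem_append, List.mem_cons, Set.mem_insert_iff,
        Set.mem_union, hA, hB, Set.mem_setOf_eq]
      constructor
      · rintro (h | h | h)
        · exact Or.inr (Or.inl h)
        · exact Or.inl (Fin.val_injective (by simpa using h))
        · exact Or.inr (Or.inr h)
      · rintro (rfl | h | h)
        · exact Or.inr (Or.inl rfl)
        · exact Or.inl h
        · exact Or.inr (Or.inr h)
    have hclosedA : ∀ u : Fin n, p u ∈ A → u ∈ A := by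
      intro u hu
      by_cases hpu : p u = u
      · rwa [hpu] at hu
      · have hpair := parent_pair π hpu
        have := hsubL.2.2.1 _ _ hpair hu
        exact (mem_pairs_mem_keysB L this).2
    have hclosedB : ∀ u : Fin n, p u ∈ B → u ∈ B := by
      intro u hu
      by_cases hpu : p u = u
      · rwa [hpu] at hu
      · have hpair := parent_pair π hpu
        have := hsubR.2.2.1 _ _ hpair hu
        exact (mem_pairs_mem_keysB R this).2
    have hchildiff : ∀ u : Fin n, u ≠ r →
        (p u = r ↔ ((u : ℕ) ∈ L.rootKeys ∨ (u : ℕ) ∈ R.rootKeys)) := by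
      intro u hu
      constructor
      · intro hpu
        have hpne : p u ≠ u := by rw [hpu]; exact fun hh => hu hh.symm
        have hpair := parent_pair π hpne
        rw [← hp] at hpair
        rw [hpu] at hpair
        have hkmem : (r : ℕ) ∈ keysB (BT.node L k R) := by simp [keysB, hr]
        have := hsub.2.2.1 _ _ hpair hkmem
        rw [mem_pairs_node_iff] at this
        rcases this with ⟨_, hv⟩ | ⟨_, hv⟩ | h' | h'
        · exact Or.inl hv
        · exact Or.inr hv
        · exact absurd (mem_pairs_mem_keysB L h').1 hkL
        · exact absurd (mem_pairs_mem_keysB R h').1 hkR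
      · intro hmem
        have hpairnode : ((r : ℕ), (u : ℕ)) ∈ (BT.node L k R).pairs := by
          rw [mem_pairs_node_iff]
          rcases hmem with h' | h'
          · exact Or.inl ⟨rfl, h'⟩
          · exact Or.inr (Or.inl ⟨rfl, h'⟩)
        have := parent_eq π (hsub.2.1 _ hpairnode)
        rw [← hp] at this
        exact this
    have hsplit := root_split p
      (fun v => (List.ofFn fun k => ((π k : ℕ))).idxOf ((v : ℕ)))
      (parent_depth π) hclosedA hclosedB (Set.toFinite A) (Set.toFinite B)
      (show r ∉ A from fun h => hkL h) (show r ∉ B from fun h => hkR h)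
    have lhsEq : (∃ x ∈ (BT.node L k R).rootKeys, ∃ hx : x < n,
        (⟨x, hx⟩ : Fin n) ∈ layeredIndepSetOn p {v : Fin n | (v : ℕ) ∈ keysB (BT.node L k R)})
        ↔ r ∈ layeredIndepSetOn p (insert r (A ∪ B)) := by
      rw [setEq]
      constructor
      · rintro ⟨x, hx, hxn, hmem⟩
        simp only [BT.rootKeys, List.mem_singleton] at hx
        subst hx
        exact hmem
      · intro hmem
        exact ⟨k, by simp [BT.rootKeys], hkn, hmem⟩
    rw [lhsEq, hsplit]
    have gchar : gBT (BT.node L k R) = true ↔ gBT L = false ∧ gBT R = false := by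
      simp [gBT]
    rw [gchar]
    constructor
    · intro H
      constructor
      · rw [Bool.eq_false_iff]
        intro hgl
        obtain ⟨x, hx, hxn, hmem⟩ := (ihL hndL hsubL).mpr hgl
        set u : Fin n := ⟨x, hxn⟩ with hu
        have hune : u ≠ r := by
          intro hh
          apply hkL
          have : (u : ℕ) = k := by rw [hh]
          rw [← this]
          exact mem_rootKeys_mem_keysB hx
        have hpu : p u = r := (hchildiff u hune).mpr (Or.inl hx)
        exact (H u hune hpu).1 hmem
      · rw [Bool.eq_false_iff]
        intro hgr
        obtain ⟨x, hx, hxn, hmem⟩ := (ihR hndR hsubR).mpr hgr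
        set u : Fin n := ⟨x, hxn⟩ with hu
        have hune : u ≠ r := by
          intro hh
          apply hkR
          have : (u : ℕ) = k := by rw [hh]
          rw [← this]
          exact mem_rootKeys_mem_keysB hx
        have hpu : p u = r := (hchildiff u hune).mpr (Or.inr hx)
        exact (H u hune hpu).2 hmem
    · rintro ⟨hgl, hgr⟩ u hune hpu
      rcases (hchildiff u hune).mp hpu with hx | hx
      · constructor
        · intro hmem
          have : gBT L = true := (ihL hndL hsubL).mp ⟨(u : ℕ), hx, u.isLt, by rw [Fin.eta]; exact hmem⟩
          rw [this] at hgl; simp at hgl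
        · intro hmem
          have huB : u ∈ B := layeredIndepSetOn_subset p B hmem
          exact hdisj (u : ℕ) (mem_rootKeys_mem_keysB hx) huB
      · constructor
        · intro hmem
          have huA : u ∈ A := layeredIndepSetOn_subset p A hmem
          exact hdisj (u : ℕ) huA (mem_rootKeys_mem_keysB hx)
        · intro hmem
          have : gBT R = true := (ihR hndR hsubR).mp ⟨(u : ℕ), hx, u.isLt, by rw [Fin.eta]; exact hmem⟩
          rw [this] at hgr; simp at hgr

end PartD

namespace PartD
open BTAux LayerAux

theorem rootLIS_iff_g (m : ℕ) (π : Equiv.Perm (Fin (m + 1))) :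
    (π ⟨0, Nat.succ_pos m⟩ ∈ layeredIndepSet (bstParent (m + 1) π)) ↔ gBT (treeOf π) = true := by
  have huniv : {v : Fin (m + 1) | (v : ℕ) ∈ keysB (treeOf π)} = Set.univ := by
    ext v; simp [mem_keys_treeOf π, v.isLt, Nat.lt_succ_iff.mp v.isLt]
  have hmain := mem_LIS_iff_g π (treeOf π) (nodup_keys_treeOf π) (isSub_refl _)
  rw [huniv] at hmain
  have hroot : (treeOf π).rootKeys = [((π ⟨0, Nat.succ_pos m⟩ : ℕ))] := by
    rw [treeOf, List.ofFn_succ, bstOfList_cons]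
    rfl
  rw [hroot] at hmain
  rw [← hmain]
  constructor
  · intro h
    exact ⟨_, List.mem_singleton_self _, (π _).isLt, by rw [Fin.eta]; exact h⟩
  · rintro ⟨x, hx, hxn, hmem⟩
    simp only [List.mem_singleton] at hx
    subst hx
    rwa [Fin.eta] at hmem

end PartD

namespace PartE
open BTAux PartD

def mapBT (f : ℕ → ℕ) : BT → BT
  | .nil => .nil
  | .node L k R => .node (mapBT f L) (f k) (mapBT f R)

lemma insert_mapBT {f : ℕ → ℕ} (hf : ∀ a b, f a < f b ↔ a < b) :
    ∀ (T : BT) (k : ℕ), (mapBT f T).insert (f k) = mapBT f (T.insert k)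
  | .nil, k => rfl
  | .node L x R, k => by
    simp only [mapBT, BT.insert, hf k x]
    by_cases h : k < x
    · simp [h, insert_mapBT hf L k, mapBT]
    · simp [h, insert_mapBT hf R k, mapBT]

lemma foldl_insert_mapBT {f : ℕ → ℕ} (hf : ∀ a b, f a < f b ↔ a < b) :
    ∀ (l : List ℕ) (T : BT),
      (l.map f).foldl BT.insert (mapBT f T) = mapBT f (l.foldl BT.insert T)
  | [], T => rfl
  | a :: l, T => by
    simp only [List.map_cons, List.foldl_cons, insert_mapBT hf T a]
    exact foldl_insert_mapBT hf l (T.insert a)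

lemma bstOfList_map {f : ℕ → ℕ} (hf : ∀ a b, f a < f b ↔ a < b) (l : List ℕ) :
    bstOfList (l.map f) = mapBT f (bstOfList l) :=
  foldl_insert_mapBT hf l .nil

lemma gBT_mapBT (f : ℕ → ℕ) : ∀ T : BT, gBT (mapBT f T) = gBT T
  | .nil => rfl
  | .node L k R => by
    simp only [mapBT, gBT, gBT_mapBT f L, gBT_mapBT f R]

lemma gBT_bstOfList_map {f : ℕ → ℕ} (hf : ∀ a b, f a < f b ↔ a < b) (l : List ℕ) :
    gBT (bstOfList (l.map f)) = gBT (bstOfList l) := by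
  rw [bstOfList_map hf, gBT_mapBT]

lemma sorted_finRange (m : ℕ) : (List.finRange m).Pairwise (· ≤ ·) :=
  List.pairwise_le_finRange m

lemma filter_finRange_eq_sort {m : ℕ} (q : Fin m → Bool) :
    (List.finRange m).filter q = (Finset.univ.filter (fun i => q i)).sort (· ≤ ·) := by
  refine List.Perm.eq_of_pairwise' ((sorted_finRange m).filter q)
    (Finset.pairwise_sort _ _) ?_
  refine List.perm_of_nodup_nodup_toFinset_eq ((List.nodup_finRange m).filter q)
    (Finset.sort_nodup _ _) ?_
  rw [List.toFinset_filter, Finset.sort_toFinset, List.toFinset_finRange]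

lemma filter_ofFn_sorted {m : ℕ} (h : Fin m → ℕ) (q : ℕ → Bool) :
    (List.ofFn h).filter q =
      ((Finset.univ.filter (fun i => q (h i))).sort (· ≤ ·)).map h := by
  rw [List.ofFn_eq_map, List.filter_map,
    show (q ∘ h) = (fun i => q (h i)) from rfl, filter_finRange_eq_sort (fun i => q (h i))]

lemma map_sort_eq_ofFn {m j : ℕ} (s : Finset (Fin m)) (hs : s.card = j) (h : Fin m → ℕ) :
    (s.sort (· ≤ ·)).map h =
      List.ofFn (fun t : Fin j => h ((s.orderIsoOfFin hs t : Fin m))) := by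
  apply List.ext_getElem
  · simp [Finset.length_sort, hs]
  · intro i h1 h2
    have hlen : (s.sort (· ≤ ·)).length = j := by rw [Finset.length_sort, hs]
    have hi : i < j := by simpa [hlen] using h2
    rw [List.getElem_map, List.getElem_ofFn, Finset.coe_orderIsoOfFin_apply,
      Finset.orderEmbOfFin_apply]
    rfl

end PartE

namespace PartE
open BTAux PartD

section Phi

variable {m : ℕ} (k : Fin (m + 1))

lemma card_compl_eq {s : Finset (Fin m)} (hs : s.card = (k : ℕ)) :
    sᶜ.card = m - (k : ℕ) := by
  rw [Finset.card_compl, hs, Fintype.card_fin]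

def fFun (s : Finset (Fin m)) (hs : s.card = (k : ℕ))
    (σ : Equiv.Perm (Fin (k : ℕ))) (τ : Equiv.Perm (Fin (m - (k : ℕ)))) :
    Fin (m + 1) → Fin (m + 1) := fun i =>
  Fin.cases k (fun i' =>
    if h : i' ∈ s then
      ⟨(σ ((s.orderIsoOfFin hs).symm ⟨i', h⟩) : ℕ), by
        have h1 := (σ ((s.orderIsoOfFin hs).symm ⟨i', h⟩)).isLt
        have h2 := k.isLt
        omega⟩
    else
      ⟨(k : ℕ) + 1 + (τ ((sᶜ.orderIsoOfFin (card_compl_eq k hs)).symm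
          ⟨i', Finset.mem_compl.mpr h⟩) : ℕ), by
        have h1 := (τ ((sᶜ.orderIsoOfFin (card_compl_eq k hs)).symm
          ⟨i', Finset.mem_compl.mpr h⟩)).isLt
        have h2 := Nat.lt_succ_iff.mp k.isLt
        omega⟩) i

variable (s : Finset (Fin m)) (hs : s.card = (k : ℕ))
  (σ : Equiv.Perm (Fin (k : ℕ))) (τ : Equiv.Perm (Fin (m - (k : ℕ))))

lemma fFun_zero : fFun k s hs σ τ 0 = k := by simp [fFun]

lemma fFun_succ_mem {i : Fin m} (h : i ∈ s) :
    ((fFun k s hs σ τ i.succ : Fin (m + 1)) : ℕ) =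
      (σ ((s.orderIsoOfFin hs).symm ⟨i, h⟩) : ℕ) := by
  simp [fFun, h]

lemma fFun_succ_not {i : Fin m} (h : i ∉ s) :
    ((fFun k s hs σ τ i.succ : Fin (m + 1)) : ℕ) =
      (k : ℕ) + 1 + (τ ((sᶜ.orderIsoOfFin (card_compl_eq k hs)).symm
        ⟨i, Finset.mem_compl.mpr h⟩) : ℕ) := by
  simp [fFun, h]

lemma fFun_succ_lt_iff (i : Fin m) :
    ((fFun k s hs σ τ i.succ : Fin (m + 1)) : ℕ) < (k : ℕ) ↔ i ∈ s := by
  by_cases h : i ∈ s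
  · rw [fFun_succ_mem k s hs σ τ h]
    simpa [h] using (σ ((s.orderIsoOfFin hs).symm ⟨i, h⟩)).isLt
  · rw [fFun_succ_not k s hs σ τ h]
    simp [h]
    omega

lemma fFun_inj : Function.Injective (fFun k s hs σ τ) := by
  intro a b hab
  have hv := congrArg Fin.val hab
  induction a using Fin.cases with
  | zero =>
    induction b using Fin.cases with
    | zero => rfl
    | succ i =>
      exfalso
      rw [fFun_zero] at hv
      by_cases h : i ∈ s
      · have := (fFun_succ_lt_iff k s hs σ τ i).mpr h
        omega
      · rw [fFun_succ_not k s hs σ τ h] at hv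
        omega
  | succ i =>
    induction b using Fin.cases with
    | zero =>
      exfalso
      rw [fFun_zero] at hv
      by_cases h : i ∈ s
      · have := (fFun_succ_lt_iff k s hs σ τ i).mpr h
        omega
      · rw [fFun_succ_not k s hs σ τ h] at hv
        omega
    | succ i' =>
      have hmemiff : i ∈ s ↔ i' ∈ s := by
        rw [← fFun_succ_lt_iff k s hs σ τ i, ← fFun_succ_lt_iff k s hs σ τ i', hv]
      by_cases h : i ∈ s
      · have h' : i' ∈ s := hmemiff.mp h
        rw [fFun_succ_mem k s hs σ τ h, fFun_succ_mem k s hs σ τ h'] at hv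
        have h1 : σ ((s.orderIsoOfFin hs).symm ⟨i, h⟩) =
            σ ((s.orderIsoOfFin hs).symm ⟨i', h'⟩) := Fin.val_injective hv
        have h2 := (s.orderIsoOfFin hs).symm.injective (σ.injective h1)
        have h3 : i = i' := congrArg Subtype.val h2
        rw [h3]
      · have h' : i' ∉ s := fun hh => h (hmemiff.mpr hh)
        rw [fFun_succ_not k s hs σ τ h, fFun_succ_not k s hs σ τ h'] at hv
        have hv' : (τ ((sᶜ.orderIsoOfFin (card_compl_eq k hs)).symm
            ⟨i, Finset.mem_compl.mpr h⟩) : ℕ) =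
            (τ ((sᶜ.orderIsoOfFin (card_compl_eq k hs)).symm
            ⟨i', Finset.mem_compl.mpr h'⟩) : ℕ) := by omega
        have h1 := Fin.val_injective hv'
        have h2 := (sᶜ.orderIsoOfFin (card_compl_eq k hs)).symm.injective (τ.injective h1)
        have h3 : i = i' := congrArg Subtype.val h2
        rw [h3]

noncomputable def PhiPerm : Equiv.Perm (Fin (m + 1)) :=
  Equiv.ofBijective _ (Finite.injective_iff_bijective.mp (fFun_inj k s hs σ τ))

lemma PhiPerm_apply (i : Fin (m + 1)) : PhiPerm k s hs σ τ i = fFun k s hs σ τ i := rfl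

end Phi

end PartE

namespace PartE
open BTAux PartD

section PhiProps

variable {m : ℕ} (k : Fin (m + 1)) (s : Finset (Fin m)) (hs : s.card = (k : ℕ))
  (σ : Equiv.Perm (Fin (k : ℕ))) (τ : Equiv.Perm (Fin (m - (k : ℕ))))

lemma filter_lt_eq :
    (List.ofFn fun i : Fin m => ((PhiPerm k s hs σ τ i.succ : Fin (m + 1)) : ℕ)).filter
        (fun x => decide (x < (k : ℕ))) =
      List.ofFn (fun t : Fin (k : ℕ) => (σ t : ℕ)) := by
  rw [filter_ofFn_sorted]
  have hset : Finset.univ.filter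
      (fun i : Fin m => decide (((PhiPerm k s hs σ τ i.succ : Fin (m + 1)) : ℕ) < (k : ℕ))) = s := by
    ext i
    simp only [Finset.mem_filter, Finset.mem_univ, true_and, decide_eq_true_eq]
    rw [PhiPerm_apply]
    exact fFun_succ_lt_iff k s hs σ τ i
  rw [hset, map_sort_eq_ofFn s hs]
  congr 1
  funext t
  have hmem : ((s.orderIsoOfFin hs t : Fin m)) ∈ s := (s.orderIsoOfFin hs t).2
  rw [PhiPerm_apply, fFun_succ_mem k s hs σ τ hmem, Subtype.coe_eta,
    OrderIso.symm_apply_apply]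

lemma filter_ge_eq :
    (List.ofFn fun i : Fin m => ((PhiPerm k s hs σ τ i.succ : Fin (m + 1)) : ℕ)).filter
        (fun x => decide (¬ x < (k : ℕ))) =
      List.ofFn (fun t : Fin (m - (k : ℕ)) => (k : ℕ) + 1 + (τ t : ℕ)) := by
  rw [filter_ofFn_sorted]
  have hset : Finset.univ.filter
      (fun i : Fin m => decide (¬ ((PhiPerm k s hs σ τ i.succ : Fin (m + 1)) : ℕ) < (k : ℕ))) = sᶜ := by
    ext i
    simp only [Finset.mem_filter, Finset.mem_univ, true_and, decide_eq_true_eq,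
      Finset.mem_compl]
    rw [PhiPerm_apply]
    exact not_congr (fFun_succ_lt_iff k s hs σ τ i)
  rw [hset, map_sort_eq_ofFn sᶜ (card_compl_eq k hs)]
  congr 1
  funext t
  have hmem : ((sᶜ.orderIsoOfFin (card_compl_eq k hs) t : Fin m)) ∈ sᶜ :=
    (sᶜ.orderIsoOfFin (card_compl_eq k hs) t).2
  have hnot : ((sᶜ.orderIsoOfFin (card_compl_eq k hs) t : Fin m)) ∉ s :=
    Finset.mem_compl.mp hmem
  rw [PhiPerm_apply, fFun_succ_not k s hs σ τ hnot, Subtype.coe_eta,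
    OrderIso.symm_apply_apply]

end PhiProps

end PartE

namespace PartE
open BTAux PartD

section PhiProps2

variable {m : ℕ} (k : Fin (m + 1)) (s : Finset (Fin m)) (hs : s.card = (k : ℕ))
  (σ : Equiv.Perm (Fin (k : ℕ))) (τ : Equiv.Perm (Fin (m - (k : ℕ))))

lemma g_treeOf_Phi :
    gBT (treeOf (PhiPerm k s hs σ τ)) = (!(gBT (treeOf σ)) && !(gBT (treeOf τ))) := by
  have hzero : ((PhiPerm k s hs σ τ (0 : Fin (m + 1))) : ℕ) = (k : ℕ) := by
    rw [PhiPerm_apply, fFun_zero]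
  have hlist : (List.ofFn fun i : Fin (m + 1) => ((PhiPerm k s hs σ τ i) : ℕ)) =
      (k : ℕ) :: (List.ofFn fun i : Fin m => ((PhiPerm k s hs σ τ i.succ) : ℕ)) := by
    rw [List.ofFn_succ]
    congr 1
  have hmap : (List.ofFn fun t : Fin (m - (k : ℕ)) => (k : ℕ) + 1 + (τ t : ℕ)) =
      (List.ofFn fun t : Fin (m - (k : ℕ)) => (τ t : ℕ)).map (fun x => (k : ℕ) + 1 + x) := by
    rw [List.map_ofFn]
    rfl
  rw [treeOf, hlist, bstOfList_cons]
  simp only [gBT]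
  rw [filter_lt_eq k s hs σ τ, filter_ge_eq k s hs σ τ, hmap,
    gBT_bstOfList_map (fun a b => by omega)]
  rfl

end PhiProps2

end PartE

namespace PartE
open BTAux PartD

noncomputable def Acard (n : ℕ) : ℕ :=
  Fintype.card {π : Equiv.Perm (Fin n) // gBT (treeOf π) = true}

noncomputable def Bcard (n : ℕ) : ℕ :=
  Fintype.card {π : Equiv.Perm (Fin n) // gBT (treeOf π) = false}

lemma Acard_add_Bcard (n : ℕ) : Acard n + Bcard n = n.factorial := by
  classical
  have h1 : Acard n =
      (Finset.univ.filter (fun π : Equiv.Perm (Fin n) => gBT (treeOf π) = true)).card :=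
    Fintype.card_subtype _
  have h2 : Bcard n =
      (Finset.univ.filter (fun π : Equiv.Perm (Fin n) => ¬ gBT (treeOf π) = true)).card := by
    rw [Bcard, Fintype.card_subtype]
    congr 1
    apply Finset.filter_congr
    intro π _
    simp
  rw [h1, h2, Finset.card_filter_add_card_filter_not, Finset.card_univ,
    Fintype.card_perm, Fintype.card_fin]

noncomputable def fixZeroEquiv (m : ℕ) (k : Fin (m + 1)) :
    Equiv.Perm (Fin m) ≃ {π : Equiv.Perm (Fin (m + 1)) // π 0 = k} where
  toFun e := ⟨Equiv.Perm.decomposeFin.symm (k, e), Equiv.Perm.decomposeFin_symm_apply_zero k e⟩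
  invFun π := (Equiv.Perm.decomposeFin π.1).2
  left_inv e := by simp
  right_inv := by
    rintro ⟨π, hπ⟩
    apply Subtype.ext
    have h2 : Equiv.Perm.decomposeFin.symm (Equiv.Perm.decomposeFin π) = π :=
      Equiv.symm_apply_apply _ _
    have h3 := Equiv.Perm.decomposeFin_symm_apply_zero
      (Equiv.Perm.decomposeFin π).1 (Equiv.Perm.decomposeFin π).2
    rw [Prod.mk.eta, h2] at h3
    have h1 : (Equiv.Perm.decomposeFin π).1 = k := by rw [← h3, hπ]
    calc Equiv.Perm.decomposeFin.symm (k, (Equiv.Perm.decomposeFin π).2)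
        = Equiv.Perm.decomposeFin.symm
            ((Equiv.Perm.decomposeFin π).1, (Equiv.Perm.decomposeFin π).2) := by rw [h1]
      _ = π := by rw [Prod.mk.eta, Equiv.symm_apply_apply]

lemma card_fixZero (m : ℕ) (k : Fin (m + 1)) :
    Fintype.card {π : Equiv.Perm (Fin (m + 1)) // π 0 = k} = m.factorial := by
  rw [← Fintype.card_congr (fixZeroEquiv m k), Fintype.card_perm, Fintype.card_fin]

section Counting

variable {m : ℕ} (k : Fin (m + 1))

noncomputable def PhiSub
    (d : {s : Finset (Fin m) // s.card = (k : ℕ)} ×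
      Equiv.Perm (Fin (k : ℕ)) × Equiv.Perm (Fin (m - (k : ℕ)))) :
    {π : Equiv.Perm (Fin (m + 1)) // π 0 = k} :=
  ⟨PhiPerm k d.1.1 d.1.2 d.2.1 d.2.2, by rw [PhiPerm_apply, fFun_zero]⟩

lemma PhiSub_injective : Function.Injective (PhiSub k) := by
  rintro ⟨⟨s, hs⟩, σ, τ⟩ ⟨⟨s', hs'⟩, σ', τ'⟩ h
  have hEq : PhiPerm k s hs σ τ = PhiPerm k s' hs' σ' τ' := Subtype.ext_iff.mp h
  have hfun : ∀ i, fFun k s hs σ τ i = fFun k s' hs' σ' τ' i := by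
    intro i
    have := DFunLike.congr_fun hEq i
    rwa [PhiPerm_apply, PhiPerm_apply] at this
  have hss : s = s' := by
    ext i
    rw [← fFun_succ_lt_iff k s hs σ τ i, ← fFun_succ_lt_iff k s' hs' σ' τ' i, hfun i.succ]
  subst hss
  have hps : hs = hs' := Subsingleton.elim _ _
  subst hps
  have hσ : σ = σ' := by
    apply Equiv.ext
    intro t
    have hmem : ((s.orderIsoOfFin hs t : Fin m)) ∈ s := (s.orderIsoOfFin hs t).2
    have h1 := congrArg Fin.val (hfun ((s.orderIsoOfFin hs t : Fin m)).succ)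
    rw [fFun_succ_mem k s hs σ τ hmem, fFun_succ_mem k s hs σ' τ' hmem, Subtype.coe_eta,
      OrderIso.symm_apply_apply] at h1
    exact Fin.val_injective h1
  have hτ : τ = τ' := by
    apply Equiv.ext
    intro t
    have hmem : ((sᶜ.orderIsoOfFin (card_compl_eq k hs) t : Fin m)) ∈ sᶜ :=
      (sᶜ.orderIsoOfFin (card_compl_eq k hs) t).2
    have hnot : ((sᶜ.orderIsoOfFin (card_compl_eq k hs) t : Fin m)) ∉ s :=
      Finset.mem_compl.mp hmem
    have h1 := congrArg Fin.val (hfun ((sᶜ.orderIsoOfFin (card_compl_eq k hs) t : Fin m)).succ)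
    rw [fFun_succ_not k s hs σ τ hnot, fFun_succ_not k s hs σ' τ' hnot, Subtype.coe_eta,
      OrderIso.symm_apply_apply] at h1
    have h2 : ((τ t : Fin (m - (k : ℕ))) : ℕ) = ((τ' t : Fin (m - (k : ℕ))) : ℕ) := by omega
    exact Fin.val_injective h2
  subst hσ
  subst hτ
  rfl

lemma PhiSub_bijective : Function.Bijective (PhiSub k) := by
  rw [Fintype.bijective_iff_injective_and_card]
  refine ⟨PhiSub_injective k, ?_⟩
  rw [card_fixZero m k, Fintype.card_prod, Fintype.card_prod, Fintype.card_finset_len,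
    Fintype.card_perm, Fintype.card_perm, Fintype.card_fin, Fintype.card_fin,
    Fintype.card_fin]
  have hj : (k : ℕ) ≤ m := Nat.lt_succ_iff.mp k.isLt
  have h := Nat.choose_mul_factorial_mul_factorial hj
  calc m.choose (k : ℕ) * ((k : ℕ).factorial * (m - (k : ℕ)).factorial)
      = m.choose (k : ℕ) * (k : ℕ).factorial * (m - (k : ℕ)).factorial := by ring
    _ = m.factorial := h

def prodSubtypeEquiv {α β γ : Type*} (Q1 : β → Prop) (Q2 : γ → Prop) :
    {d : α × β × γ // Q1 d.2.1 ∧ Q2 d.2.2} ≃ α × {b // Q1 b} × {c // Q2 c} where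
  toFun d := (d.1.1, ⟨d.1.2.1, d.2.1⟩, ⟨d.1.2.2, d.2.2⟩)
  invFun x := ⟨(x.1, x.2.1.1, x.2.2.1), x.2.1.2, x.2.2.2⟩
  left_inv d := rfl
  right_inv x := rfl

lemma card_fiber :
    Fintype.card {π : Equiv.Perm (Fin (m + 1)) // π 0 = k ∧ gBT (treeOf π) = true} =
      m.choose (k : ℕ) * (Bcard (k : ℕ) * Bcard (m - (k : ℕ))) := by
  classical
  have e1 : {π : Equiv.Perm (Fin (m + 1)) // π 0 = k ∧ gBT (treeOf π) = true} ≃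
      {q : {π : Equiv.Perm (Fin (m + 1)) // π 0 = k} // gBT (treeOf q.1) = true} :=
    (Equiv.subtypeSubtypeEquivSubtypeInter _ _).symm
  have e2 : {q : {π : Equiv.Perm (Fin (m + 1)) // π 0 = k} // gBT (treeOf q.1) = true} ≃
      {d : {s : Finset (Fin m) // s.card = (k : ℕ)} ×
        Equiv.Perm (Fin (k : ℕ)) × Equiv.Perm (Fin (m - (k : ℕ))) //
        gBT (treeOf (PhiSub k d).1) = true} :=
    (Equiv.subtypeEquiv (Equiv.ofBijective _ (PhiSub_bijective k))
      (fun d => Iff.rfl)).symm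
  have e3 : {d : {s : Finset (Fin m) // s.card = (k : ℕ)} ×
        Equiv.Perm (Fin (k : ℕ)) × Equiv.Perm (Fin (m - (k : ℕ))) //
        gBT (treeOf (PhiSub k d).1) = true} ≃
      {d : {s : Finset (Fin m) // s.card = (k : ℕ)} ×
        Equiv.Perm (Fin (k : ℕ)) × Equiv.Perm (Fin (m - (k : ℕ))) //
        gBT (treeOf d.2.1) = false ∧ gBT (treeOf d.2.2) = false} := by
    apply Equiv.subtypeEquivRight
    rintro ⟨⟨s, hs⟩, σ, τ⟩
    show gBT (treeOf (PhiPerm k s hs σ τ)) = true ↔ _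
    rw [g_treeOf_Phi]
    simp
  have e4 := prodSubtypeEquiv (α := {s : Finset (Fin m) // s.card = (k : ℕ)})
    (fun σ : Equiv.Perm (Fin (k : ℕ)) => gBT (treeOf σ) = false)
    (fun τ : Equiv.Perm (Fin (m - (k : ℕ))) => gBT (treeOf τ) = false)
  rw [Fintype.card_congr (((e1.trans e2).trans e3).trans e4), Fintype.card_prod,
    Fintype.card_prod, Fintype.card_finset_len, Fintype.card_fin]
  rfl

end Counting

lemma Acard_succ (m : ℕ) :
    Acard (m + 1) = ∑ k : Fin (m + 1),
      m.choose (k : ℕ) * (Bcard (k : ℕ) * Bcard (m - (k : ℕ))) := by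
  classical
  rw [Acard, Fintype.card_subtype]
  rw [Finset.card_eq_sum_card_fiberwise
    (f := fun π : Equiv.Perm (Fin (m + 1)) => π 0) (t := Finset.univ)
    (fun x _ => Finset.mem_univ _)]
  refine Finset.sum_congr rfl ?_
  intro k _
  rw [← card_fiber k, Fintype.card_subtype]
  congr 1
  ext π
  simp [Finset.mem_filter, and_comm]


end PartE

namespace PartF
open BTAux PartD PartE

lemma bstRootProb_zero : bstRootProb 0 = 0 := by
  have h : {π : Equiv.Perm (Fin 0) | ∃ h : 0 < 0,
      π ⟨0, h⟩ ∈ layeredIndepSet (bstParent 0 π)} = ∅ := by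
    ext π
    simp
  rw [bstRootProb, h, measure_empty]
  simp

lemma Acard_zero : Acard 0 = 0 := by
  rw [Acard]
  rw [Fintype.card_eq_zero_iff]
  refine ⟨fun x => ?_⟩
  have : treeOf x.1 = BT.nil := by
    rw [treeOf, List.ofFn_zero]
    rfl
  have h2 := x.2
  rw [this] at h2
  simp [gBT] at h2

lemma event_eq (m : ℕ) :
    {π : Equiv.Perm (Fin (m + 1)) | ∃ h : 0 < m + 1,
        π ⟨0, h⟩ ∈ layeredIndepSet (bstParent (m + 1) π)} =
      {π : Equiv.Perm (Fin (m + 1)) | gBT (treeOf π) = true} := by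
  ext π
  simp only [Set.mem_setOf_eq]
  constructor
  · rintro ⟨h, hmem⟩
    exact (rootLIS_iff_g m π).mp hmem
  · intro h
    exact ⟨Nat.succ_pos m, (rootLIS_iff_g m π).mpr h⟩

lemma prob_eq (n : ℕ) : bstRootProb n = (Acard n : ℝ) / (n.factorial : ℝ) := by
  cases n with
  | zero =>
    rw [bstRootProb_zero, Acard_zero]
    simp
  | succ m =>
    classical
    haveI : Nonempty (Equiv.Perm (Fin (m + 1))) := ⟨Equiv.refl _⟩
    rw [bstRootProb, event_eq, bstMeasure,
      PMF.toMeasure_uniformOfFintype_apply _ MeasurableSpace.measurableSet_top]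
    have hcard : ∀ (inst : Fintype ↥{π : Equiv.Perm (Fin (m + 1)) | gBT (treeOf π) = true}),
        @Fintype.card _ inst = Acard (m + 1) := fun inst =>
      @Fintype.card_congr _ _ inst _ (Equiv.subtypeEquivRight (fun _ => Iff.rfl))
    rw [ENNReal.toReal_div]
    simp only [hcard]
    simp [Fintype.card_perm, Fintype.card_fin]

lemma one_sub_prob (j : ℕ) : 1 - bstRootProb j = (Bcard j : ℝ) / (j.factorial : ℝ) := by
  have hfac : (j.factorial : ℝ) ≠ 0 := Nat.cast_ne_zero.mpr j.factorial_ne_zero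
  have hAB : (Acard j : ℝ) + (Bcard j : ℝ) = (j.factorial : ℝ) := by
    exact_mod_cast congrArg (Nat.cast (R := ℝ)) (Acard_add_Bcard j)
  rw [prob_eq]
  field_simp
  linarith

theorem bstRootProb_recurrence' :
    bstRootProb 0 = 0 ∧
      ∀ n : ℕ, 1 ≤ n →
        bstRootProb n =
          (1 / (n : ℝ)) *
            ∑ j ∈ Finset.range n, (1 - bstRootProb j) * (1 - bstRootProb (n - 1 - j)) := by
  refine ⟨bstRootProb_zero, ?_⟩
  intro n hn
  obtain ⟨m, rfl⟩ := Nat.exists_eq_add_of_le hn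
  rw [show 1 + m = m + 1 by ring]
  have hsub : ∀ j : ℕ, m + 1 - 1 - j = m - j := fun j => by omega
  have hA : (Acard (m + 1) : ℝ) =
      ∑ j ∈ Finset.range (m + 1),
        (m.choose j : ℝ) * ((Bcard j : ℝ) * (Bcard (m - j) : ℝ)) := by
    rw [Acard_succ]
    rw [← Fin.sum_univ_eq_sum_range (fun j => (m.choose j : ℝ) * ((Bcard j : ℝ) * (Bcard (m - j) : ℝ))) (m + 1)]
    push_cast
    rfl
  rw [prob_eq, hA, Finset.sum_div, Finset.mul_sum]
  refine Finset.sum_congr rfl ?_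
  intro j hj
  have hjm : j ≤ m := Nat.lt_succ_iff.mp (Finset.mem_range.mp hj)
  rw [hsub j, one_sub_prob, one_sub_prob]
  have key : (m.choose j : ℝ) * (j.factorial : ℝ) * ((m - j).factorial : ℝ)
      = (m.factorial : ℝ) := by
    exact_mod_cast congrArg (Nat.cast (R := ℝ)) (Nat.choose_mul_factorial_mul_factorial hjm)
  have hfacs : (m + 1).factorial = (m + 1) * m.factorial := Nat.factorial_succ m
  have h1 : (j.factorial : ℝ) ≠ 0 := Nat.cast_ne_zero.mpr j.factorial_ne_zero
  have h2 : ((m - j).factorial : ℝ) ≠ 0 := Nat.cast_ne_zero.mpr (m - j).factorial_ne_zero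
  have h3 : (m.factorial : ℝ) ≠ 0 := Nat.cast_ne_zero.mpr m.factorial_ne_zero
  have h4 : ((m : ℝ) + 1) ≠ 0 := by positivity
  have hchoose : (m.choose j : ℝ) =
      (m.factorial : ℝ) / ((j.factorial : ℝ) * ((m - j).factorial : ℝ)) := by
    rw [eq_div_iff (mul_ne_zero h1 h2)]
    linear_combination key
  rw [hchoose, hfacs]
  push_cast
  field_simp

end PartF


/-- The probabilities `pₙ` that the root of a random binary search tree belongs to the
layered independent set satisfy `p₀ = 0` and, for `n ≥ 1`,
`pₙ = (1/n) Σ_{j=0}^{n-1} (1 - pⱼ)(1 - p_{n-1-j})`. -/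
theorem bstRootProb_recurrence :
    bstRootProb 0 = 0 ∧
      ∀ n : ℕ, 1 ≤ n →
        bstRootProb n =
          (1 / (n : ℝ)) *
            ∑ j ∈ Finset.range n, (1 - bstRootProb j) * (1 - bstRootProb (n - 1 - j)) := by
  exact PartF.bstRootProb_recurrence'
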